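/- Let p_1 and p_2 be distinct primes such that p_1 generates (Z/p_2 Z)^×. If C is a p_2 × p_2 circulant matrix with entries in F_{p_1}, then rank(C) ∈ {0, 1, p_2 - 1, p_2}. -/

import Mathlib

open Polynomial Matrix

variable (p₁ p₂ : ℕ) [Fact p₁.Prime] [NeZero p₂]

private noncomputable def Smat : Matrix (Fin p₂) (Fin p₂) (ZMod p₁) :=
  Matrix.circulant (Pi.single 1 1)

private noncomputable def theta (q : (ZMod p₁)[X]) : Fin p₂ → ZMod p₁ :=
  (Polynomial.aeval (Smat p₁ p₂) q).mulVec (Pi.single 0 1)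

private noncomputable def Pv (v : Fin p₂ → ZMod p₁) : (ZMod p₁)[X] :=
  ∑ i : Fin p₂, Polynomial.C (v i) * Polynomial.X ^ (i : ℕ)

private lemma mulVec_circulant_single (w : Fin p₂ → ZMod p₁) :
    (Matrix.circulant w).mulVec (Pi.single 0 1) = w := by
  funext i
  rw [Matrix.mulVec_single]
  simp [Matrix.circulant_apply]

private lemma Smat_mul_circulant (w : Fin p₂ → ZMod p₁) :
    Smat p₁ p₂ * Matrix.circulant w = Matrix.circulant (fun i => w (i - 1)) := by
  rw [Smat, Matrix.circulant_mul, Matrix.circulant_inj]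
  funext i
  have hrw : (Matrix.circulant (Pi.single 1 1 : Fin p₂ → ZMod p₁)).mulVec w i
      = ∑ j, (Pi.single 1 1 : Fin p₂ → ZMod p₁) (i - j) * w j := rfl
  rw [hrw]
  rw [Finset.sum_eq_single (i - 1)]
  · rw [sub_sub_cancel]
    simp
  · intro j _ hj
    have hne : i - j ≠ 1 := by
      intro h
      apply hj
      rw [← sub_sub_cancel i j, h]
    simp [Pi.single_apply, hne]
  · simp

open Fin.NatCast in
private lemma Smat_pow (m : ℕ) :
    Smat p₁ p₂ ^ m = Matrix.circulant (Pi.single ((m : Fin p₂)) 1) := by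
  induction m with
  | zero => simp [Matrix.circulant_single_one]
  | succ m ih =>
    rw [pow_succ', ih, Smat_mul_circulant, Matrix.circulant_inj]
    funext i
    have hiff : (i - 1 = (m : Fin p₂)) ↔ (i = ((m + 1 : ℕ) : Fin p₂)) := by
      push_cast
      rw [sub_eq_iff_eq_add, add_comm]
    simp only [Pi.single_apply]
    rw [if_congr hiff rfl rfl]

private lemma aeval_Pv (v : Fin p₂ → ZMod p₁) :
    Polynomial.aeval (Smat p₁ p₂) (Pv p₁ p₂ v) = Matrix.circulant v := by
  rw [Pv, map_sum]
  have h1 : ∀ i : Fin p₂,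
      Polynomial.aeval (Smat p₁ p₂) (Polynomial.C (v i) * Polynomial.X ^ (i : ℕ))
        = Matrix.circulant (Pi.single i (v i)) := by
    intro i
    rw [_root_.map_mul, map_pow, Polynomial.aeval_C, Polynomial.aeval_X, Smat_pow,
      Fin.cast_val_eq_self, ← Algebra.smul_def (A := Matrix (Fin p₂) (Fin p₂) (ZMod p₁)), ← Matrix.circulant_smul]
    rw [Matrix.circulant_inj]
    funext x
    simp [Pi.single_apply, smul_ite]
  rw [Finset.sum_congr rfl fun i _ => h1 i]
  ext r c
  simp [Matrix.sum_apply, Matrix.circulant_apply, Pi.single_apply]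

private lemma theta_Pv (v : Fin p₂ → ZMod p₁) : theta p₁ p₂ (Pv p₁ p₂ v) = v := by
  rw [theta, aeval_Pv, mulVec_circulant_single]

private lemma aeval_Xpow_sub_one :
    Polynomial.aeval (Smat p₁ p₂) ((Polynomial.X : (ZMod p₁)[X]) ^ p₂ - 1) = 0 := by
  simp only [_root_.map_sub, _root_.map_one, map_pow, Polynomial.aeval_X]
  rw [Smat_pow, Fin.natCast_self, Matrix.circulant_single_one, sub_self]

private lemma theta_mul_left (q : (ZMod p₁)[X]) :
    theta p₁ p₂ (((Polynomial.X : (ZMod p₁)[X]) ^ p₂ - 1) * q) = 0 := by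
  rw [theta, _root_.map_mul, aeval_Xpow_sub_one, zero_mul, Matrix.zero_mulVec]

private lemma theta_add (q q' : (ZMod p₁)[X]) :
    theta p₁ p₂ (q + q') = theta p₁ p₂ q + theta p₁ p₂ q' := by
  rw [theta, theta, theta, map_add, Matrix.add_mulVec]

private lemma theta_smul (c : ZMod p₁) (q : (ZMod p₁)[X]) :
    theta p₁ p₂ (c • q) = c • theta p₁ p₂ q := by
  rw [theta, theta, Polynomial.smul_eq_C_mul, _root_.map_mul, Polynomial.aeval_C,
    ← Algebra.smul_def (A := Matrix (Fin p₂) (Fin p₂) (ZMod p₁)), Matrix.smul_mulVec]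

private lemma circulant_mulVec_theta (a : Fin p₂ → ZMod p₁) (q : (ZMod p₁)[X]) :
    (Matrix.circulant a).mulVec (theta p₁ p₂ q) = theta p₁ p₂ (Pv p₁ p₂ a * q) := by
  rw [theta, theta, Matrix.mulVec_mulVec, ← aeval_Pv p₁ p₂ a, ← _root_.map_mul]

private lemma theta_eq_zero_dvd (q : (ZMod p₁)[X]) (hq : theta p₁ p₂ q = 0) :
    ((Polynomial.X : (ZMod p₁)[X]) ^ p₂ - 1) ∣ q := by
  have hp₂ : p₂ ≠ 0 := NeZero.ne p₂
  set B : (ZMod p₁)[X] := (Polynomial.X : (ZMod p₁)[X]) ^ p₂ - 1 with hB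
  have hBm : B.Monic := by
    have := Polynomial.monic_X_pow_sub_C (1 : ZMod p₁) hp₂
    rwa [_root_.map_one] at this
  set r : (ZMod p₁)[X] := q %ₘ B with hr
  have hsplit : r + B * (q /ₘ B) = q := Polynomial.modByMonic_add_div q B
  have hθr : theta p₁ p₂ r = 0 := by
    have := theta_add p₁ p₂ r (B * (q /ₘ B))
    rw [hsplit, theta_mul_left, add_zero] at this
    rw [← this, hq]
  have hdeg : r.degree < (p₂ : WithBot ℕ) := by
    have h1 := Polynomial.degree_modByMonic_lt q hBm
    have h2 : B.degree = (p₂ : WithBot ℕ) := by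
      have := Polynomial.degree_X_pow_sub_C (Nat.pos_of_ne_zero hp₂) (1 : ZMod p₁)
      rwa [_root_.map_one] at this
    rwa [h2] at h1
  rw [← Polynomial.modByMonic_eq_zero_iff_dvd hBm]
  by_cases hr0 : r = 0
  · exact hr0
  have hnd : r.natDegree < p₂ := by
    rwa [← Polynomial.natDegree_lt_iff_degree_lt hr0] at hdeg
  have hrep : Pv p₁ p₂ (fun i : Fin p₂ => r.coeff (i : ℕ)) = r := by
    rw [Pv]
    conv_rhs => rw [Polynomial.as_sum_range' r p₂ hnd]
    rw [← Fin.sum_univ_eq_sum_range (fun i => Polynomial.monomial i (r.coeff i)) p₂]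
    exact Finset.sum_congr rfl fun i _ => Polynomial.C_mul_X_pow_eq_monomial
  have hv : (fun i : Fin p₂ => r.coeff (i : ℕ)) = 0 := by
    rw [← theta_Pv p₁ p₂ (fun i : Fin p₂ => r.coeff (i : ℕ)), hrep, hθr]
  exfalso
  apply hr0
  rw [Polynomial.as_sum_range' r p₂ hnd]
  refine Finset.sum_eq_zero fun i hi => ?_
  have : r.coeff i = 0 := by
    have := congrFun hv ⟨i, Finset.mem_range.mp hi⟩
    simpa using this
  rw [this, map_zero]

private lemma cyclo_irred [Fact p₂.Prime] (hne : p₁ ≠ p₂)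
    (hgen : orderOf ((p₁ : ZMod p₂)) = p₂ - 1) :
    Irreducible (Polynomial.cyclotomic p₂ (ZMod p₁)) := by
  have hp₂ : p₂.Prime := Fact.out
  have h2 : 2 ≤ p₂ := hp₂.two_le
  set k := ZMod p₁ with hk
  set Φ : k[X] := Polynomial.cyclotomic p₂ k with hΦ
  have hmon : Φ.Monic := Polynomial.cyclotomic.monic p₂ k
  have hΦdeg : Φ.natDegree = p₂ - 1 := by
    rw [hΦ, Polynomial.natDegree_cyclotomic, Nat.totient_prime hp₂]
  have hΦ0 : Φ ≠ 0 := hmon.ne_zero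
  have hnu : ¬ IsUnit Φ := by
    intro h
    have := Polynomial.natDegree_eq_zero_of_isUnit h
    omega
  obtain ⟨g, hgi, hgd⟩ := WfDvdMonoid.exists_irreducible_factor hnu hΦ0
  have hg0 : g ≠ 0 := hgi.ne_zero
  haveI : Fact (Irreducible g) := ⟨hgi⟩
  set K := AdjoinRoot g with hK
  have hfr : Module.finrank k K = g.natDegree := by
    have h := PowerBasis.finrank (AdjoinRoot.powerBasis hg0)
    rwa [AdjoinRoot.powerBasis_dim] at h
  haveI : Module.Finite k K := Module.Finite.of_basis (AdjoinRoot.powerBasis hg0).basis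
  haveI : Finite K := Module.finite_of_finite k
  haveI : Fintype K := Fintype.ofFinite K
  set ζ : K := AdjoinRoot.root g with hζ
  have hgζ : Polynomial.aeval ζ g = 0 := by
    rw [hζ, AdjoinRoot.aeval_eq, AdjoinRoot.mk_self]
  have hΦζ : Polynomial.aeval ζ Φ = 0 := by
    obtain ⟨t, ht⟩ := hgd
    rw [ht, _root_.map_mul, hgζ, zero_mul]
  have hζp : ζ ^ p₂ = 1 := by
    have hcyc := Polynomial.cyclotomic_prime_mul_X_sub_one k p₂
    have := congrArg (Polynomial.aeval ζ) hcyc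
    rw [_root_.map_mul, hΦζ, zero_mul, _root_.map_sub, map_pow,
      Polynomial.aeval_X, _root_.map_one] at this
    rw [← sub_eq_zero, ← this]
  have hζ1 : ζ ≠ 1 := by
    intro h
    have heval : Polynomial.aeval (1 : K) Φ = algebraMap k K ((p₂ : k)) := by
      rw [← Polynomial.eval_one_cyclotomic_prime (R := k) (p := p₂), ← hΦ,
        Polynomial.aeval_def, Polynomial.eval₂_at_one]
    rw [h, heval] at hΦζ
    have hz : ((p₂ : ℕ) : k) = 0 := by
      apply (algebraMap k K).injective
      rw [map_zero, ← hΦζ]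
    rw [ZMod.natCast_eq_zero_iff] at hz
    exact hne ((Nat.prime_dvd_prime_iff_eq Fact.out hp₂).mp hz)
  have horder : orderOf ζ = p₂ := orderOf_eq_prime hζp hζ1
  have hζ0 : ζ ≠ 0 := by
    intro h
    rw [h, zero_pow hp₂.ne_zero] at hζp
    exact zero_ne_one hζp
  have hcard : Fintype.card K = p₁ ^ g.natDegree := by
    rw [Module.card_eq_pow_finrank (K := k) (V := K), hfr, ZMod.card]
  have hdvd : p₂ ∣ p₁ ^ g.natDegree - 1 := by
    rw [← horder, ← hcard]
    exact orderOf_dvd_of_pow_eq_one (FiniteField.pow_card_sub_one_eq_one ζ hζ0)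
  have hpow : ((p₁ : ZMod p₂)) ^ g.natDegree = 1 := by
    have h1le : 1 ≤ p₁ ^ g.natDegree := Nat.one_le_pow _ _ (Fact.out : p₁.Prime).pos
    have : ((p₁ ^ g.natDegree - 1 : ℕ) : ZMod p₂) = 0 :=
      (ZMod.natCast_eq_zero_iff _ _).mpr hdvd
    rw [Nat.cast_sub h1le, Nat.cast_pow, Nat.cast_one, sub_eq_zero] at this
    exact this
  have hdg : p₂ - 1 ∣ g.natDegree := by
    rw [← hgen]
    exact orderOf_dvd_of_pow_eq_one hpow
  have hdpos : 0 < g.natDegree := hgi.natDegree_pos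
  have hge : p₂ - 1 ≤ g.natDegree := Nat.le_of_dvd hdpos hdg
  have hle : g.natDegree ≤ p₂ - 1 := hΦdeg ▸ Polynomial.natDegree_le_of_dvd hgd hΦ0
  have hdeq : g.natDegree = Φ.natDegree := by omega
  -- conclude Φ associated to g
  obtain ⟨t, ht⟩ := hgd
  have ht0 : t ≠ 0 := by
    intro h; rw [h, mul_zero] at ht; exact hΦ0 ht
  have htdeg : t.natDegree = 0 := by
    have := Polynomial.natDegree_mul hg0 ht0
    rw [← ht] at this
    omega
  have htu : IsUnit t := by
    rw [Polynomial.isUnit_iff_degree_eq_zero, Polynomial.degree_eq_natDegree ht0, htdeg]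
    rfl
  have : Associated g Φ := by
    obtain ⟨u, hu⟩ := htu
    exact ⟨u, by rw [ht, hu]⟩
  exact this.irreducible hgi

private lemma divisor_degree [Fact p₂.Prime] (hne : p₁ ≠ p₂)
    (hgen : orderOf ((p₁ : ZMod p₂)) = p₂ - 1) (g : (ZMod p₁)[X])
    (hg : g ∣ (Polynomial.X : (ZMod p₁)[X]) ^ p₂ - 1) (hg0 : g ≠ 0) :
    g.natDegree = 0 ∨ g.natDegree = 1 ∨ g.natDegree = p₂ - 1 ∨ g.natDegree = p₂ := by
  have hp₂ : p₂.Prime := Fact.out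
  have h2 : 2 ≤ p₂ := hp₂.two_le
  set k := ZMod p₁ with hk
  set Φ : k[X] := Polynomial.cyclotomic p₂ k with hΦ
  have hΦirr : Irreducible Φ := cyclo_irred p₁ p₂ hne hgen
  have hΦdeg : Φ.natDegree = p₂ - 1 := by
    rw [hΦ, Polynomial.natDegree_cyclotomic, Nat.totient_prime hp₂]
  have hΦ0 : Φ ≠ 0 := (Polynomial.cyclotomic.monic p₂ k).ne_zero
  have hfac : Φ * (Polynomial.X - 1) = (Polynomial.X : k[X]) ^ p₂ - 1 :=
    Polynomial.cyclotomic_prime_mul_X_sub_one k p₂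
  have hX1irr : Irreducible ((Polynomial.X : k[X]) - 1) := by
    have := Polynomial.irreducible_X_sub_C (1 : k)
    rwa [_root_.map_one] at this
  have hX10 : ((Polynomial.X : k[X]) - 1) ≠ 0 := hX1irr.ne_zero
  have hX1deg : ((Polynomial.X : k[X]) - 1).natDegree = 1 := by
    have := Polynomial.natDegree_X_sub_C (1 : k)
    rwa [_root_.map_one] at this
  rw [← hfac] at hg
  by_cases hdvd : ((Polynomial.X : k[X]) - 1) ∣ g
  · obtain ⟨g₁, rfl⟩ := hdvd
    have hg₁0 : g₁ ≠ 0 := by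
      intro h; rw [h, mul_zero] at hg0; exact hg0 rfl
    have hg₁Φ : g₁ ∣ Φ := by
      have h' : (Polynomial.X - 1) * g₁ ∣ (Polynomial.X - 1) * Φ := by
        rwa [mul_comm Φ] at hg
      exact (mul_dvd_mul_iff_left hX10).mp h'
    obtain ⟨t, ht⟩ := hg₁Φ
    have ht0 : t ≠ 0 := fun h => hΦ0 (by rw [ht, h, mul_zero])
    rcases hΦirr.isUnit_or_isUnit ht with hu | hu
    · right; left
      rw [Polynomial.natDegree_mul hX10 hg₁0, hX1deg,
        Polynomial.natDegree_eq_zero_of_isUnit hu]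
    · right; right; right
      have : Φ.natDegree = g₁.natDegree + t.natDegree :=
        ht ▸ Polynomial.natDegree_mul hg₁0 ht0
      have htd : t.natDegree = 0 := Polynomial.natDegree_eq_zero_of_isUnit hu
      rw [Polynomial.natDegree_mul hX10 hg₁0, hX1deg]
      omega
  · have hcop : IsCoprime ((Polynomial.X : k[X]) - 1) g :=
      (hX1irr.coprime_iff_not_dvd).mpr hdvd
    have hgΦ : g ∣ Φ := hcop.symm.dvd_of_dvd_mul_right hg
    obtain ⟨t, ht⟩ := hgΦ
    have ht0 : t ≠ 0 := fun h => hΦ0 (by rw [ht, h, mul_zero])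
    rcases hΦirr.isUnit_or_isUnit ht with hu | hu
    · left; exact Polynomial.natDegree_eq_zero_of_isUnit hu
    · right; right; left
      have : Φ.natDegree = g.natDegree + t.natDegree :=
        ht ▸ Polynomial.natDegree_mul hg0 ht0
      have htd : t.natDegree = 0 := Polynomial.natDegree_eq_zero_of_isUnit hu
      omega

private noncomputable def muMap (g : (ZMod p₁)[X]) (m : ℕ) :
    Polynomial.degreeLT (ZMod p₁) m →ₗ[ZMod p₁] (Fin p₂ → ZMod p₁) where
  toFun t := theta p₁ p₂ (g * (t : (ZMod p₁)[X]))
  map_add' t₁ t₂ := by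
    simp only [Submodule.coe_add, mul_add]
    exact theta_add p₁ p₂ _ _
  map_smul' c t := by
    simp only [SetLike.val_smul, RingHom.id_apply]
    rw [mul_smul_comm, theta_smul]

private lemma rank_aux [Fact p₂.Prime] (a : Fin p₂ → ZMod p₁) :
    ∃ g : (ZMod p₁)[X], g ∣ (Polynomial.X : (ZMod p₁)[X]) ^ p₂ - 1 ∧ g ≠ 0 ∧
      (Matrix.circulant a).rank + g.natDegree = p₂ := by
  classical
  have hp₂ : p₂.Prime := Fact.out
  have hp₂0 : p₂ ≠ 0 := hp₂.ne_zero
  set B : (ZMod p₁)[X] := (Polynomial.X : (ZMod p₁)[X]) ^ p₂ - 1 with hB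
  have hBm : B.Monic := by
    have := Polynomial.monic_X_pow_sub_C (1 : ZMod p₁) hp₂0
    rwa [_root_.map_one] at this
  have hB0 : B ≠ 0 := hBm.ne_zero
  have hBdeg : B.natDegree = p₂ := by
    have := Polynomial.natDegree_X_pow_sub_C (n := p₂) (r := (1 : ZMod p₁))
    rwa [_root_.map_one] at this
  set f : (ZMod p₁)[X] := Pv p₁ p₂ a with hf
  set g₀ : (ZMod p₁)[X] := EuclideanDomain.gcd f B with hg₀
  have hg₀0 : g₀ ≠ 0 := by
    intro h
    exact hB0 (EuclideanDomain.gcd_eq_zero_iff.mp h).2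
  set g : (ZMod p₁)[X] := normalize g₀ with hg
  have hgm : g.Monic := Polynomial.monic_normalize hg₀0
  have hgne : g ≠ 0 := hgm.ne_zero
  have hgB : g ∣ B := by
    rw [hg, normalize_dvd_iff]
    exact EuclideanDomain.gcd_dvd_right f B
  have hgf : g ∣ f := by
    rw [hg, normalize_dvd_iff]
    exact EuclideanDomain.gcd_dvd_left f B
  obtain ⟨h, hBgh⟩ := hgB
  have hhm : h.Monic := hgm.of_mul_monic_left (hBgh ▸ hBm)
  have hh0 : h ≠ 0 := hhm.ne_zero
  set m : ℕ := h.natDegree with hm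
  have hsum : g.natDegree + m = p₂ := by
    rw [hm, ← Polynomial.natDegree_mul hgne hh0, ← hBgh, hBdeg]
  have hbez : ∃ α β : (ZMod p₁)[X], g = f * α + B * β := by
    refine ⟨EuclideanDomain.gcdA f B * ↑(normUnit g₀), EuclideanDomain.gcdB f B * ↑(normUnit g₀), ?_⟩
    have h1 : g₀ = f * EuclideanDomain.gcdA f B + B * EuclideanDomain.gcdB f B :=
      EuclideanDomain.gcd_eq_gcd_ab f B
    rw [hg, normalize_apply, h1]
    ring
  -- range equality
  have hrange : LinearMap.range (Matrix.circulant a).mulVecLin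
      = LinearMap.range (muMap p₁ p₂ g m) := by
    apply le_antisymm
    · rintro v ⟨w, rfl⟩
      have hw : (Matrix.circulant a).mulVecLin w = theta p₁ p₂ (f * Pv p₁ p₂ w) := by
        rw [Matrix.mulVecLin_apply, ← theta_Pv p₁ p₂ w, circulant_mulVec_theta, theta_Pv]
      obtain ⟨f', hf'⟩ := hgf
      set Q : (ZMod p₁)[X] := f' * Pv p₁ p₂ w with hQ
      set r : (ZMod p₁)[X] := Q %ₘ h with hr
      have hrsplit : r + h * (Q /ₘ h) = Q := Polynomial.modByMonic_add_div Q h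
      have hrmem : r ∈ Polynomial.degreeLT (ZMod p₁) m := by
        rw [Polynomial.mem_degreeLT]
        exact lt_of_lt_of_le (Polynomial.degree_modByMonic_lt Q hhm)
          (Polynomial.degree_le_natDegree)
      refine ⟨⟨r, hrmem⟩, ?_⟩
      have : g * Q = g * r + B * (Q /ₘ h) := by
        conv_lhs => rw [← hrsplit]
        rw [hBgh]; ring
      show theta p₁ p₂ (g * r) = _
      rw [hw, hf', mul_assoc, ← hQ, this, theta_add, theta_mul_left, add_zero]
    · rintro v ⟨t, rfl⟩
      obtain ⟨α, β, hαβ⟩ := hbez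
      show theta p₁ p₂ (g * (t : (ZMod p₁)[X])) ∈ _
      have : g * (t : (ZMod p₁)[X]) = f * (α * t) + B * (β * t) := by rw [hαβ]; ring
      rw [this, theta_add, theta_mul_left, add_zero, ← circulant_mulVec_theta]
      exact ⟨theta p₁ p₂ (α * t), by rw [Matrix.mulVecLin_apply]⟩
  -- injectivity
  have hinj : Function.Injective (muMap p₁ p₂ g m) := by
    rw [← LinearMap.ker_eq_bot, LinearMap.ker_eq_bot']
    rintro ⟨t, htmem⟩ ht0
    have hθ : theta p₁ p₂ (g * t) = 0 := ht0
    have hdvd : B ∣ g * t := theta_eq_zero_dvd p₁ p₂ _ hθ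
    rw [hBgh] at hdvd
    have hht : h ∣ t := (mul_dvd_mul_iff_left hgne).mp hdvd
    have htlt : t.degree < h.degree := by
      rw [Polynomial.mem_degreeLT] at htmem
      rwa [Polynomial.degree_eq_natDegree hh0]
    have : t = 0 := Polynomial.eq_zero_of_dvd_of_degree_lt hht htlt
    exact Subtype.ext this
  refine ⟨g, ⟨h, hBgh⟩, hgne, ?_⟩
  have hrk : (Matrix.circulant a).rank = m := by
    rw [Matrix.rank, hrange, LinearMap.finrank_range_of_inj hinj,
      (Polynomial.degreeLTEquiv (ZMod p₁) m).finrank_eq, Module.finrank_pi, Fintype.card_fin]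
  omega

theorem stmt_8 (p₁ p₂ : ℕ) [Fact p₁.Prime] (hp₂ : p₂.Prime) (hne : p₁ ≠ p₂)
    (hgen : orderOf ((p₁ : ZMod p₂)) = p₂ - 1) (a : Fin p₂ → ZMod p₁) :
    (Matrix.circulant a).rank = 0 ∨ (Matrix.circulant a).rank = 1 ∨
      (Matrix.circulant a).rank = p₂ - 1 ∨ (Matrix.circulant a).rank = p₂ := by
  haveI : Fact p₂.Prime := ⟨hp₂⟩
  haveI : NeZero p₂ := ⟨hp₂.ne_zero⟩
  have h2 : 2 ≤ p₂ := hp₂.two_le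
  obtain ⟨g, hgB, hg0, hrk⟩ := rank_aux p₁ p₂ a
  rcases divisor_degree p₁ p₂ hne hgen g hgB hg0 with h | h | h | h
  · right; right; right; omega
  · right; right; left; omega
  · right; left; omega
  · left; omega
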